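/- arXiv:1104.3762 — 2 statements merged into one kernel-verified Lean document; each statement's English description precedes it below -/
import Mathlib

section
/- Let a ≥ 2 and b = 1 (the Brun algorithm). For Lebesgue-almost every x ∈ Λ^{a+1}, T_{a,1}^k(x) → (0,…,0) as k → ∞ and σ(x) = Σ_{k=0}^∞ (T_{a,1}^k(x))_a. -/
open MeasureTheory Filter Topology

/-- `Λⁿ`: points of `ℝⁿ` with nonnegative, nondecreasing coordinates. -/
def Lambda (n : ℕ) : Set (Fin n → ℝ) := {x | (∀ i, 0 ≤ x i) ∧ Monotone x}

/-- The vector `(x₁,…,x_a, x_{a+1}-x_a,…,x_{a+b}-x_a)` (0-based indexing). -/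
noncomputable def subVec (a b : ℕ) (x : Fin (a + b) → ℝ) : Fin (a + b) → ℝ :=
  fun j => if (j : ℕ) < a then x j else x j - x ⟨a - 1, by have := j.isLt; omega⟩

/-- The map `T_{a,b}`: nondecreasing rearrangement of `subVec a b x`. -/
noncomputable def Tab (a b : ℕ) (x : Fin (a + b) → ℝ) : Fin (a + b) → ℝ :=
  subVec a b x ∘ Tuple.sort (subVec a b x)

/-- the index `a-1` in `Fin (a+1)` -/
def idx (a : ℕ) : Fin (a + 1) := ⟨a - 1, by omega⟩

lemma subVec_lt {a : ℕ} (x : Fin (a+1) → ℝ) {j : Fin (a+1)} (hj : (j:ℕ) < a) :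
    subVec a 1 x j = x j := by simp [subVec, hj]

lemma subVec_ge {a : ℕ} (x : Fin (a+1) → ℝ) {j : Fin (a+1)} (hj : ¬ (j:ℕ) < a) :
    subVec a 1 x j = x j - x (idx a) := by
  simp only [subVec, if_neg hj]; rfl

lemma sum_subVec {a : ℕ} (x : Fin (a+1) → ℝ) :
    ∑ j, subVec a 1 x j = (∑ j, x j) - x (idx a) := by
  have h : ∀ j : Fin (a+1), subVec a 1 x j
      = x j - (if j = Fin.last a then x (idx a) else 0) := by
    intro j
    by_cases hj : (j:ℕ) < a
    · rw [subVec_lt x hj, if_neg (by simp [Fin.ext_iff]; omega), sub_zero]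
    · rw [subVec_ge x hj, if_pos (by simp [Fin.ext_iff]; omega : j = Fin.last a)]
  simp only [h, Finset.sum_sub_distrib, Finset.sum_ite_eq' Finset.univ,
    Finset.mem_univ, if_pos]

lemma sum_Tab {a : ℕ} (x : Fin (a+1) → ℝ) :
    ∑ j, Tab a 1 x j = (∑ j, x j) - x (idx a) := by
  rw [← sum_subVec x]
  exact Equiv.sum_comp (Tuple.sort (subVec a 1 x)) (subVec a 1 x)

lemma Tab_mem_Lambda {a : ℕ} {x : Fin (a+1) → ℝ} (hx : x ∈ Lambda (a+1)) :
    Tab a 1 x ∈ Lambda (a+1) := by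
  constructor
  · intro i
    have h : ∀ j, 0 ≤ subVec a 1 x j := by
      intro j
      by_cases hj : (j:ℕ) < a
      · rw [subVec_lt x hj]; exact hx.1 j
      · rw [subVec_ge x hj]
        have : x (idx a) ≤ x j := hx.2 (by simp [idx, Fin.le_def]; omega)
        linarith
    exact h _
  · exact Tuple.monotone_sort _

lemma Tab_of_two_mul_le {a : ℕ} (ha : 1 ≤ a) {x : Fin (a+1) → ℝ} (hx : x ∈ Lambda (a+1))
    (h : 2 * x (idx a) ≤ x (Fin.last a)) :
    Tab a 1 x = subVec a 1 x := by
  have hmono : Monotone (subVec a 1 x) := by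
    intro i j hij
    by_cases hj : (j:ℕ) < a
    · rw [subVec_lt x (lt_of_le_of_lt hij hj), subVec_lt x hj]
      exact hx.2 hij
    · rw [subVec_ge x hj]
      have hje : j = Fin.last a := by simp [Fin.ext_iff]; omega
      by_cases hi : (i:ℕ) < a
      · rw [subVec_lt x hi]
        have h1 : x i ≤ x (idx a) := hx.2 (by simp [idx, Fin.le_def]; omega)
        rw [hje]; linarith
      · rw [subVec_ge x hi]
        have : i = j := by simp [Fin.ext_iff]; omega
        rw [this]
  have := (Tuple.comp_sort_eq_comp_iff_monotone (σ := 1)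
    (f := subVec a 1 x)).mpr (by simpa using hmono)
  simpa [Tab] using this.symm

noncomputable def subEquiv (a : ℕ) (ha : 1 ≤ a) :
    (Fin (a+1) → ℝ) ≃ₗ[ℝ] (Fin (a+1) → ℝ) where
  toFun := subVec a 1
  map_add' x y := by
    funext j; by_cases hj : (j:ℕ) < a <;>
      simp [subVec, hj] <;> ring
  map_smul' c x := by
    funext j; by_cases hj : (j:ℕ) < a <;>
      simp [subVec, hj] <;> ring
  invFun y := fun j => if (j:ℕ) < a then y j else y j + y (idx a)
  left_inv x := by
    funext j
    by_cases hj : (j:ℕ) < a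
    · simp [subVec, hj]
    · have hia : ((idx a : Fin (a+1)):ℕ) < a := by simp [idx]; omega
      simp only [hj, if_neg, subVec, idx]
      simp [hia, show (a-1) < a by omega]
  right_inv y := by
    funext j
    by_cases hj : (j:ℕ) < a
    · simp [subVec, hj]
    · have : ¬ ((a:ℕ) - 1 < a) → False := by omega
      simp only [subVec, hj, if_false]
      simp [show (a-1) < a by omega, idx]

lemma null_preimage_Tab {a : ℕ} (ha : 1 ≤ a) {N : Set (Fin (a+1) → ℝ)}
    (hN : volume N = 0) : volume (Tab a 1 ⁻¹' N) = 0 := by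
  have hsub : Tab a 1 ⁻¹' N ⊆
      ⋃ π : Equiv.Perm (Fin (a+1)),
        (fun x => (subEquiv a ha x) ∘ π) ⁻¹' N := by
    intro x hx
    exact Set.mem_iUnion.2 ⟨Tuple.sort (subVec a 1 x), hx⟩
  refine measure_mono_null hsub (measure_iUnion_null fun π => ?_)
  have : (fun x : Fin (a+1) → ℝ => (subEquiv a ha x) ∘ π)
      = ⇑((subEquiv a ha).trans (LinearEquiv.funCongrLeft ℝ ℝ (π : Fin (a+1) ≃ Fin (a+1)))) := by
    rfl
  rw [this, Measure.addHaar_preimage_linearEquiv, hN, mul_zero]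

lemma null_hyperplane (a : ℕ) :
    volume {y : Fin (a+1) → ℝ | y (idx a) = 0} = 0 := by
  have : {y : Fin (a+1) → ℝ | y (idx a) = 0}
      = (LinearMap.ker (LinearMap.proj (R := ℝ) (φ := fun _ : Fin (a+1) => ℝ) (idx a)) : Set _) := by
    ext y; simp [LinearMap.mem_ker]
  rw [this]
  apply Measure.addHaar_submodule
  intro h
  have h1 : Pi.single (idx a) (1:ℝ) ∈
      LinearMap.ker (LinearMap.proj (R := ℝ) (φ := fun _ : Fin (a+1) => ℝ) (idx a)) := by
    rw [h]; trivial
  simp [LinearMap.mem_ker] at h1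

lemma coord_le_sum {a : ℕ} {x : Fin (a+1) → ℝ} (hx : x ∈ Lambda (a+1)) (j : Fin (a+1)) :
    x j ≤ ∑ i, x i :=
  Finset.single_le_sum (fun i _ => hx.1 i) (Finset.mem_univ j)

lemma sum_le_last {a : ℕ} {x : Fin (a+1) → ℝ} (hx : x ∈ Lambda (a+1)) :
    ∑ i, x i ≤ (a+1) * x (Fin.last a) := by
  calc ∑ i, x i ≤ ∑ _i : Fin (a+1), x (Fin.last a) :=
        Finset.sum_le_sum (fun i _ => hx.2 (Fin.le_last i))
    _ = (a+1) * x (Fin.last a) := by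
        rw [Finset.sum_const, Finset.card_univ, Fintype.card_fin, nsmul_eq_mul]
        push_cast; ring

set_option maxHeartbeats 1600000 in
lemma main_conv {a : ℕ} (ha : 2 ≤ a) {x : Fin (a+1) → ℝ} (hx : x ∈ Lambda (a+1))
    (hpos : ∀ k, 0 < (Tab a 1)^[k] x (idx a)) :
    Tendsto (fun k => (Tab a 1)^[k] x) atTop (𝓝 0) ∧
      Summable (fun k : ℕ => (Tab a 1)^[k] x (idx a)) ∧
      ∑ i, x i = ∑' k : ℕ, (Tab a 1)^[k] x (idx a) := by
  set T := Tab a 1 with hT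
  set t : ℕ → ℝ := fun k => T^[k] x (idx a) with htdef
  set S : ℕ → ℝ := fun k => ∑ i, T^[k] x i with hSdef
  have hmem : ∀ k, T^[k] x ∈ Lambda (a+1) := by
    intro k; induction k with
    | zero => simpa using hx
    | succ k ih => rw [Function.iterate_succ_apply']; exact Tab_mem_Lambda ih
  have hrec : ∀ k, S (k+1) = S k - t k := by
    intro k
    simp only [hSdef, htdef, Function.iterate_succ_apply']
    exact sum_Tab _
  have hpartial : ∀ k, ∑ j ∈ Finset.range k, t j = S 0 - S k := by
    intro k; induction k with
    | zero => simp
    | succ k ih => rw [Finset.sum_range_succ, ih, hrec]; ring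
  have ht0 : ∀ k, 0 ≤ t k := fun k => (hmem k).1 _
  have hS0 : ∀ k, 0 ≤ S k := fun k => Finset.sum_nonneg (fun i _ => (hmem k).1 i)
  have hsum : Summable t := by
    apply summable_of_sum_range_le ht0
    intro k; rw [hpartial]; linarith [hS0 k]
  have hSeq : S = fun k => S 0 - ∑ j ∈ Finset.range k, t j := by
    funext k; rw [hpartial]; ring
  have hSlim : Tendsto S atTop (𝓝 (S 0 - ∑' k, t k)) := by
    have h := (tendsto_const_nhds (x := S 0) (f := atTop)).sub
      hsum.hasSum.tendsto_sum_nat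
    refine h.congr fun k => ?_
    rw [hpartial]; ring
  have hSge : ∀ k, S 0 - ∑' k, t k ≤ S k := by
    intro k
    have h1 := Summable.sum_le_tsum (Finset.range k) (fun i _ => ht0 i) hsum
    have h2 := hpartial k
    linarith
  have hLnn : 0 ≤ S 0 - ∑' k, t k :=
    ge_of_tendsto hSlim (Eventually.of_forall hS0)
  have hL : S 0 - ∑' k, t k = 0 := by
    by_contra hL0
    have hLpos : 0 < S 0 - ∑' k, t k := lt_of_le_of_ne hLnn (Ne.symm hL0)
    set L := S 0 - ∑' k, t k with hLdef
    have htto : Tendsto t atTop (𝓝 0) := hsum.tendsto_atTop_zero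
    obtain ⟨K, hK⟩ := eventually_atTop.mp
      (htto.eventually_lt_const (show (0:ℝ) < L / (2 * (a+1)) by positivity))
    have hconst : ∀ k, K ≤ k → t (k+1) = t k := by
      intro k hk
      have hy := hmem k
      have hlast : L / (a+1) ≤ T^[k] x (Fin.last a) := by
        have h1 := sum_le_last hy
        have h2 := hSge k
        rw [div_le_iff₀ (by positivity)]
        calc L ≤ S k := h2
          _ ≤ (a+1) * T^[k] x (Fin.last a) := h1
          _ = T^[k] x (Fin.last a) * (a+1) := by ring
      have h2 : 2 * T^[k] x (idx a) ≤ T^[k] x (Fin.last a) := by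
        have h4 := hK k hk
        have h5 : L / (2*((a:ℝ)+1)) * 2 = L / ((a:ℝ)+1) := by
          field_simp
        have h6 : 2 * t k < L / ((a:ℝ)+1) := by linarith
        calc 2 * T^[k] x (idx a) = 2 * t k := rfl
          _ ≤ L / ((a:ℝ)+1) := le_of_lt h6
          _ ≤ _ := hlast
      have hTeq := Tab_of_two_mul_le (by omega) hy h2
      show T^[k+1] x (idx a) = T^[k] x (idx a)
      rw [Function.iterate_succ_apply', hT, hTeq]
      exact subVec_lt _ (by simp [idx]; omega)
    have hconst' : ∀ k, K ≤ k → t k = t K := by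
      intro k hk
      induction k, hk using Nat.le_induction with
      | base => rfl
      | succ k hk ih => rw [hconst k hk, ih]
    have h7 := tendsto_nhds_unique (tendsto_atTop_of_eventually_const hconst') htto
    exact absurd h7 (hpos K).ne'
  refine ⟨?_, hsum, ?_⟩
  · rw [tendsto_pi_nhds]
    intro i
    simp only [Pi.zero_apply]
    have hto0 : Tendsto S atTop (𝓝 0) := hL ▸ hSlim
    exact squeeze_zero (fun k => (hmem k).1 i) (fun k => coord_le_sum (hmem k) i) hto0
  · have : S 0 = ∑' k, t k := by linarith
    simpa [hSdef] using this

/-- Brun algorithm: for `a ≥ 2`, for a.e. `x ∈ Λ^{a+1}`,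
`T_{a,1}^k(x) → 0` and `σ(x) = Σ_k (T_{a,1}^k x)_a`. -/
theorem statement11 (a : ℕ) (ha : 2 ≤ a) :
    ∀ᵐ x : Fin (a + 1) → ℝ, x ∈ Lambda (a + 1) →
      Tendsto (fun k => (Tab a 1)^[k] x) atTop (𝓝 0) ∧
      Summable (fun k : ℕ => (Tab a 1)^[k] x ⟨a - 1, by omega⟩) ∧
      ∑ i, x i = ∑' k : ℕ, (Tab a 1)^[k] x ⟨a - 1, by omega⟩ := by
  have ha1 : 1 ≤ a := by omega
  set Z : Set (Fin (a+1) → ℝ) := {y | y (idx a) = 0} with hZ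
  have hZ0 : volume Z = 0 := null_hyperplane a
  have hIter : ∀ k : ℕ, volume ((Tab a 1)^[k] ⁻¹' Z) = 0 := by
    intro k; induction k with
    | zero => simpa using hZ0
    | succ k ih =>
        rw [Function.iterate_succ]
        rw [Set.preimage_comp]
        exact null_preimage_Tab ha1 ih
  have hB : volume (⋃ k : ℕ, (Tab a 1)^[k] ⁻¹' Z) = 0 :=
    measure_iUnion_null hIter
  have hae : ∀ᵐ x : Fin (a+1) → ℝ, x ∉ ⋃ k : ℕ, (Tab a 1)^[k] ⁻¹' Z := by
    rw [← measure_eq_zero_iff_ae_notMem]; exact hB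
  filter_upwards [hae] with x hxB hxΛ
  have hpos : ∀ k, 0 < (Tab a 1)^[k] x (idx a) := by
    intro k
    have hmem : (Tab a 1)^[k] x ∈ Lambda (a+1) := by
      clear hxB
      induction k with
      | zero => simpa using hxΛ
      | succ k ih => rw [Function.iterate_succ_apply']; exact Tab_mem_Lambda ih
    have hne : (Tab a 1)^[k] x (idx a) ≠ 0 := by
      intro h0
      exact hxB (Set.mem_iUnion.2 ⟨k, h0⟩)
    exact lt_of_le_of_ne (hmem.1 _) (Ne.symm hne)
  exact main_conv ha hxΛ hpos
end

section
/- Let a ≥ 1 and b ≥ 2 be integers. For Lebesgue-almost every x ∈ A, the limit lim_{k→∞} T_{a,b}^k(x) is not the origin; equivalently, lim_{k→∞} (T_{a,b}^k(x))_{a+b} > 0 for almost every x ∈ A. -/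
open MeasureTheory Filter Topology

section Aux

variable {a b : ℕ}

lemma subVec_nonneg (ha : 1 ≤ a) {x : Fin (a + b) → ℝ} (hx : x ∈ Lambda (a + b))
    (j : Fin (a + b)) : 0 ≤ subVec a b x j := by
  unfold subVec
  split
  · exact hx.1 j
  · have hle : (⟨a - 1, by have := j.isLt; omega⟩ : Fin (a + b)) ≤ j := by
      rw [Fin.le_def]; simp; omega
    have := hx.2 hle
    linarith

lemma subVec_le_last (ha : 1 ≤ a) (hb : 1 ≤ b) {x : Fin (a + b) → ℝ}
    (hx : x ∈ Lambda (a + b)) (j : Fin (a + b)) :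
    subVec a b x j ≤ x ⟨a + b - 1, by omega⟩ := by
  have hj : x j ≤ x ⟨a + b - 1, by omega⟩ := by
    apply hx.2
    rw [Fin.le_def]; simp; have := j.isLt; omega
  unfold subVec
  split
  · exact hj
  · have := hx.1 (⟨a - 1, by have := j.isLt; omega⟩ : Fin (a + b))
    linarith

lemma tab_monotone (x : Fin (a + b) → ℝ) : Monotone (Tab a b x) :=
  Tuple.monotone_sort (subVec a b x)

lemma tab_mem_Lambda (ha : 1 ≤ a) {x : Fin (a + b) → ℝ} (hx : x ∈ Lambda (a + b)) :
    Tab a b x ∈ Lambda (a + b) :=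
  ⟨fun j => subVec_nonneg ha hx _, tab_monotone x⟩

lemma subVec_le_tab_last (ha : 1 ≤ a) (hb : 1 ≤ b) (x : Fin (a + b) → ℝ) (j : Fin (a + b)) :
    subVec a b x j ≤ Tab a b x ⟨a + b - 1, by omega⟩ := by
  set e := Tuple.sort (subVec a b x) with he
  have h1 : subVec a b x j = Tab a b x (e.symm j) := by
    simp [Tab, ← he]
  rw [h1]
  apply tab_monotone
  rw [Fin.le_def]; simp; have := (e.symm j).isLt; omega

lemma tab_last_le (ha : 1 ≤ a) (hb : 1 ≤ b) {x : Fin (a + b) → ℝ} (hx : x ∈ Lambda (a + b)) :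
    Tab a b x ⟨a + b - 1, by omega⟩ ≤ x ⟨a + b - 1, by omega⟩ :=
  subVec_le_last ha hb hx _

lemma tab_last_ge (ha : 1 ≤ a) (hb : 1 ≤ b) (x : Fin (a + b) → ℝ) :
    x ⟨a + b - 1, by omega⟩ - x ⟨a - 1, by omega⟩ ≤ Tab a b x ⟨a + b - 1, by omega⟩ := by
  have h := subVec_le_tab_last ha hb x ⟨a + b - 1, by omega⟩
  unfold subVec at h
  rw [if_neg (by simp; omega)] at h
  exact h

lemma sum_tab (ha : 1 ≤ a) (x : Fin (a + b) → ℝ) :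
    ∑ i, Tab a b x i = ∑ i, x i - (b : ℝ) * x ⟨a - 1, by omega⟩ := by
  have h1 : ∑ i, Tab a b x i = ∑ i, subVec a b x i := by
    exact Equiv.sum_comp (Tuple.sort (subVec a b x)) (subVec a b x)
  rw [h1]
  have h2 : ∀ j : Fin (a + b), subVec a b x j =
      x j - (if (j : ℕ) < a then (0:ℝ) else x ⟨a - 1, by omega⟩) := by
    intro j
    unfold subVec
    split <;> ring
  rw [Finset.sum_congr rfl (fun j _ => h2 j), Finset.sum_sub_distrib]
  congr 1
  rw [Fin.sum_univ_eq_sum_range (fun j => if j < a then (0:ℝ) else x ⟨a - 1, by omega⟩)]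
  rw [Finset.range_eq_Ico, ← Finset.sum_Ico_consecutive _ (Nat.zero_le a) (Nat.le_add_right a b)]
  have h3 : ∑ j ∈ Finset.Ico 0 a, (if j < a then (0:ℝ) else x ⟨a - 1, by omega⟩) = 0 := by
    apply Finset.sum_eq_zero
    intro j hj
    rw [Finset.mem_Ico] at hj
    rw [if_pos hj.2]
  have h4 : ∑ j ∈ Finset.Ico a (a + b), (if j < a then (0:ℝ) else x ⟨a - 1, by omega⟩)
      = (b : ℝ) * x ⟨a - 1, by omega⟩ := by
    have hcongr : ∀ j ∈ Finset.Ico a (a + b),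
        (if j < a then (0:ℝ) else x ⟨a - 1, by omega⟩) = x ⟨a - 1, by omega⟩ := by
      intro j hj
      rw [Finset.mem_Ico] at hj
      rw [if_neg (by omega)]
    rw [Finset.sum_congr rfl hcongr, Finset.sum_const, Nat.card_Ico,
      Nat.add_sub_cancel_left, nsmul_eq_mul]
  rw [h3, h4, zero_add]

lemma last_le_sum (ha : 1 ≤ a) (hb : 1 ≤ b) {x : Fin (a + b) → ℝ} (hx : x ∈ Lambda (a + b)) :
    x ⟨a + b - 1, by omega⟩ ≤ ∑ i, x i :=
  Finset.single_le_sum (fun i _ => hx.1 i) (Finset.mem_univ _)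

lemma main_det (ha : 1 ≤ a) (hb : b ≥ 2) (x : Fin (a + b) → ℝ)
    (hΛ : x ∈ Lambda (a + b)) (hlt : ∑ i, x i < (b : ℝ) * x ⟨a + b - 1, by omega⟩) :
    ∃ L : ℝ, 0 < L ∧
      Tendsto (fun k => (Tab a b)^[k] x ⟨a + b - 1, by omega⟩) atTop (𝓝 L) := by
  have hb1 : 1 ≤ b := by omega
  set m : ℕ → ℝ := fun k => (Tab a b)^[k] x ⟨a + b - 1, by omega⟩ with hm
  set S : ℕ → ℝ := fun k => ∑ i, (Tab a b)^[k] x i with hS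
  set δ : ℝ := (b : ℝ) * x ⟨a + b - 1, by omega⟩ - ∑ i, x i with hδ
  have hδpos : 0 < δ := by simp [hδ]; linarith
  -- invariants by induction
  have key : ∀ k, (Tab a b)^[k] x ∈ Lambda (a + b) ∧ δ ≤ (b : ℝ) * m k - S k := by
    intro k
    induction k with
    | zero =>
      refine ⟨hΛ, ?_⟩
      simp [hm, hS, hδ]
    | succ n ih =>
      have hstep : (Tab a b)^[n+1] x = Tab a b ((Tab a b)^[n] x) :=
        Function.iterate_succ_apply' _ _ _
      set y := (Tab a b)^[n] x with hy
      refine ⟨by rw [hstep]; exact tab_mem_Lambda ha ih.1, ?_⟩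
      have h1 : S (n + 1) = S n - (b : ℝ) * y ⟨a - 1, by omega⟩ := by
        simp only [hS, hstep]
        exact sum_tab ha y
      have h2 : y ⟨a + b - 1, by omega⟩ - y ⟨a - 1, by omega⟩ ≤ m (n + 1) := by
        simp only [hm, hstep]
        exact tab_last_ge ha hb1 y
      have h3 : m n = y ⟨a + b - 1, by omega⟩ := rfl
      have := ih.2
      rw [h3] at this
      have hbR : (2 : ℝ) ≤ (b : ℝ) := by exact_mod_cast hb
      nlinarith [h2, h1]
  -- m is antitone
  have hanti : Antitone m := by
    apply antitone_nat_of_succ_le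
    intro n
    have hstep : (Tab a b)^[n+1] x = Tab a b ((Tab a b)^[n] x) :=
      Function.iterate_succ_apply' _ _ _
    simp only [hm, hstep]
    exact tab_last_le ha hb1 (key n).1
  -- lower bound
  set c : ℝ := δ / ((b : ℝ) - 1) with hc
  have hbR : (2 : ℝ) ≤ (b : ℝ) := by exact_mod_cast hb
  have hb1R : (0 : ℝ) < (b : ℝ) - 1 := by linarith
  have hcpos : 0 < c := div_pos hδpos hb1R
  have hlb : ∀ k, c ≤ m k := by
    intro k
    have h1 := (key k).2
    have h2 : m k ≤ S k := last_le_sum ha hb1 (key k).1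
    rw [hc, div_le_iff₀ hb1R]
    nlinarith
  refine ⟨⨅ k, m k, lt_of_lt_of_le hcpos (le_ciInf hlb), ?_⟩
  exact tendsto_atTop_ciInf hanti ⟨c, by rintro _ ⟨k, rfl⟩; exact hlb k⟩

lemma null_hyper (ha : 1 ≤ a) (hb : b ≥ 2) :
    volume {x : Fin (a + b) → ℝ | ∑ i, x i = (b : ℝ) * x ⟨a + b - 1, by omega⟩} = 0 := by
  set f : (Fin (a + b) → ℝ) →ₗ[ℝ] ℝ :=
    (∑ i : Fin (a + b), LinearMap.proj i) - (b : ℝ) • LinearMap.proj ⟨a + b - 1, by omega⟩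
    with hf
  have happ : ∀ x : Fin (a + b) → ℝ, f x = ∑ i, x i - (b : ℝ) * x ⟨a + b - 1, by omega⟩ := by
    intro x
    simp [hf, LinearMap.sum_apply, LinearMap.proj_apply]
  have hset : {x : Fin (a + b) → ℝ | ∑ i, x i = (b : ℝ) * x ⟨a + b - 1, by omega⟩}
      = (LinearMap.ker f : Set (Fin (a + b) → ℝ)) := by
    ext x
    simp [LinearMap.mem_ker, happ x, sub_eq_zero]
  rw [hset]
  apply Measure.addHaar_submodule
  intro htop
  set v : Fin (a + b) → ℝ := Pi.single (⟨0, by omega⟩ : Fin (a + b)) 1 with hv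
  have hmem : v ∈ LinearMap.ker f := htop ▸ Submodule.mem_top
  rw [LinearMap.mem_ker, happ] at hmem
  have h1 : ∑ i, v i = 1 := by
    simp [hv]
  have h2 : v ⟨a + b - 1, by omega⟩ = 0 := by
    rw [hv, Pi.single_apply, if_neg (by simp only [Fin.mk.injEq]; omega)]
  rw [h1, h2, mul_zero, sub_zero] at hmem
  exact one_ne_zero hmem

end Aux

/-- for `a ≥ 1`, `b ≥ 2`, for a.e. `x ∈ A` the last coordinate of
the iterates converges to a strictly positive limit (so the orbit does not
converge to the origin). -/
theorem statement12 (a b : ℕ) (ha : 1 ≤ a) (hb : 2 ≤ b) :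
    ∀ᵐ x : Fin (a + b) → ℝ,
      (x ∈ Lambda (a + b) ∧ ∑ i, x i ≤ (b : ℝ) * x ⟨a + b - 1, by omega⟩) →
      ∃ L : ℝ, 0 < L ∧
        Tendsto (fun k => (Tab a b)^[k] x ⟨a + b - 1, by omega⟩) atTop (𝓝 L) := by
  have hnull := null_hyper ha hb
  have hae : ∀ᵐ x : Fin (a + b) → ℝ,
      ∑ i, x i ≠ (b : ℝ) * x ⟨a + b - 1, by omega⟩ := by
    rw [ae_iff]
    simpa using hnull
  filter_upwards [hae] with x hne hx
  exact main_det ha hb x hx.1 (lt_of_le_of_ne hx.2 hne)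
end
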